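/- For all p, q, r, s ∈ ℂ, every nonzero t ∈ ℂ, and every permutation π of the 4-tuple (p,q,r,s): if L and L′ are complex Lie algebras admitting bases realizing the bracket patterns d₂₀(p,q,r,s) and d₂₀(t·π(p,q,r,s)) respectively, then L and L′ are isomorphic as Lie algebras over ℂ. (Thus the family d₂₀ is parameterized by the projective orbifold ℙ³/Σ₄, where Σ₄ permutes the projective coordinates.) -/

import Mathlib

/-- `Realizes L c` means that the complex Lie algebra `L` admits a basis `e₁, …, e₅`
(indexed by `Fin 5`) in which the brackets of basis vectors are given by the
structure constants `c`, i.e. `⁅eᵢ, eⱼ⁆ = ∑ₖ c i j k • eₖ` for all `i < j`,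
all brackets of basis vectors being determined by these via antisymmetry. -/
def Realizes (L : Type) [LieRing L] [LieAlgebra ℂ L]
    (c : Fin 5 → Fin 5 → Fin 5 → ℂ) : Prop :=
  ∃ e : Module.Basis (Fin 5) ℂ L, ∀ i j : Fin 5, i < j →
    ⁅e i, e j⁆ = ∑ k, c i j k • e k

/-- The bracket pattern `d₂₀(v₀, v₁, v₂, v₃)`: `[e₁,e₅]=v₀·e₁`, `[e₂,e₅]=e₁+v₁·e₂`,
`[e₃,e₅]=e₂+v₂·e₃`, `[e₄,e₅]=e₃+v₃·e₄`, all other brackets zero. -/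
def d20 (v : Fin 4 → ℂ) : Fin 5 → Fin 5 → Fin 5 → ℂ := fun i j =>
  if i = 0 ∧ j = 4 then ![v 0, 0, 0, 0, 0]
  else if i = 1 ∧ j = 4 then ![1, v 1, 0, 0, 0]
  else if i = 2 ∧ j = 4 then ![0, 1, v 2, 0, 0]
  else if i = 3 ∧ j = 4 then ![0, 0, 1, v 3, 0]
  else 0

set_option maxHeartbeats 1000000
namespace D20Aux

def E1 (v : Fin 4 → ℂ) : ℂ := v 0 + v 1 + v 2 + v 3
def E2 (v : Fin 4 → ℂ) : ℂ :=
  v 0 * v 1 + v 0 * v 2 + v 0 * v 3 + v 1 * v 2 + v 1 * v 3 + v 2 * v 3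
def E3 (v : Fin 4 → ℂ) : ℂ :=
  v 0 * v 1 * v 2 + v 0 * v 1 * v 3 + v 0 * v 2 * v 3 + v 1 * v 2 * v 3
def E4 (v : Fin 4 → ℂ) : ℂ := v 0 * v 1 * v 2 * v 3

def comp (c : Fin 4 → ℂ) : Fin 5 → Fin 5 → Fin 5 → ℂ := fun i j =>
  if i = 0 ∧ j = 4 then ![0, 1, 0, 0, 0]
  else if i = 1 ∧ j = 4 then ![0, 0, 1, 0, 0]
  else if i = 2 ∧ j = 4 then ![0, 0, 0, 1, 0]
  else if i = 3 ∧ j = 4 then ![-c 3, c 2, -c 1, c 0, 0]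
  else 0

lemma E_perm (π : Equiv.Perm (Fin 4)) (v : Fin 4 → ℂ) :
    E1 (v ∘ π) = E1 v ∧ E2 (v ∘ π) = E2 v ∧ E3 (v ∘ π) = E3 v ∧ E4 (v ∘ π) = E4 v := by
  have h1 := Equiv.sum_comp π v
  have h2 := Equiv.sum_comp π (fun i => v i ^ 2)
  have h3 := Equiv.sum_comp π (fun i => v i ^ 3)
  have h4 := Equiv.prod_comp π v
  simp only [Fin.sum_univ_four, Fin.prod_univ_four] at h1 h2 h3 h4
  refine ⟨?_, ?_, ?_, ?_⟩ <;> simp only [E1, E2, E3, E4, Function.comp_apply]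
  · exact h1
  · linear_combination ((v (π 0) + v (π 1) + v (π 2) + v (π 3) + v 0 + v 1 + v 2 + v 3)/2) * h1
      - (1/2) * h2
  · linear_combination (((v (π 0) + v (π 1) + v (π 2) + v (π 3))^2
        + (v (π 0) + v (π 1) + v (π 2) + v (π 3)) * (v 0 + v 1 + v 2 + v 3)
        + (v 0 + v 1 + v 2 + v 3)^2
        - 3 * (v (π 0)^2 + v (π 1)^2 + v (π 2)^2 + v (π 3)^2)) / 6) * h1
      - ((v 0 + v 1 + v 2 + v 3) / 2) * h2 + (1/3) * h3
  · exact h4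

lemma iso_of_realizes_same (c : Fin 5 → Fin 5 → Fin 5 → ℂ)
    (L L' : Type) [LieRing L] [LieAlgebra ℂ L] [LieRing L'] [LieAlgebra ℂ L']
    (hL : Realizes L c) (hL' : Realizes L' c) : Nonempty (L ≃ₗ⁅ℂ⁆ L') := by
  obtain ⟨e, he⟩ := hL
  obtain ⟨f, hf⟩ := hL'
  let g : L ≃ₗ[ℂ] L' := e.equiv f (Equiv.refl _)
  have hgb : ∀ i, g (e i) = f i := fun i => e.equiv_apply i f (Equiv.refl _)
  have key : ∀ i j : Fin 5, ⁅g (e i), g (e j)⁆ = g ⁅e i, e j⁆ := by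
    have key' : ∀ i j : Fin 5, i < j → ⁅g (e i), g (e j)⁆ = g ⁅e i, e j⁆ := by
      intro i j hij
      rw [hgb, hgb, hf i j hij, he i j hij, map_sum]
      simp [hgb]
    intro i j
    rcases lt_trichotomy i j with h | h | h
    · exact key' i j h
    · subst h; simp
    · have h1 : ⁅g (e j), g (e i)⁆ = g ⁅e j, e i⁆ := key' j i h
      have h2 : -⁅g (e j), g (e i)⁆ = -g ⁅e j, e i⁆ := by rw [h1]
      rw [lie_skew] at h2
      rw [h2, ← map_neg, lie_skew]
  have main : ∀ x y : L, ⁅g x, g y⁆ = g ⁅x, y⁆ := by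
    let B1 : L →ₗ[ℂ] L →ₗ[ℂ] L' := LinearMap.mk₂ ℂ (fun x y => ⁅g x, g y⁆)
      (by intro m₁ m₂ n; simp [add_lie])
      (by intro a m n; simp [smul_lie])
      (by intro m n₁ n₂; simp [lie_add])
      (by intro a m n; simp [lie_smul])
    let B2 : L →ₗ[ℂ] L →ₗ[ℂ] L' := LinearMap.mk₂ ℂ (fun x y => g ⁅x, y⁆)
      (by intro m₁ m₂ n; simp [add_lie])
      (by intro a m n; simp [smul_lie])
      (by intro m n₁ n₂; simp [lie_add])
      (by intro a m n; simp [lie_smul])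
    have hB : B1 = B2 := by
      apply e.ext; intro i
      apply e.ext; intro j
      exact key i j
    intro x y
    have := LinearMap.congr_fun (LinearMap.congr_fun hB x) y
    simpa [B1, B2] using this
  exact ⟨{ g with map_lie' := by intro x y; exact (main x y).symm }⟩

lemma realizes_comp (L : Type) [LieRing L] [LieAlgebra ℂ L]
    (v : Fin 4 → ℂ) (t : ℂ) (ht : t ≠ 0) (hL : Realizes L (d20 v)) :
    Realizes L (comp ![t * E1 v, t ^ 2 * E2 v, t ^ 3 * E3 v, t ^ 4 * E4 v]) := by
  obtain ⟨e, he⟩ := hL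
  have b04 : ⁅e 0, e 4⁆ = v 0 • e 0 := by
    simpa [d20, Fin.sum_univ_five] using he 0 4 (by decide)
  have b14 : ⁅e 1, e 4⁆ = e 0 + v 1 • e 1 := by
    simpa [d20, Fin.sum_univ_five] using he 1 4 (by decide)
  have b24 : ⁅e 2, e 4⁆ = e 1 + v 2 • e 2 := by
    simpa [d20, Fin.sum_univ_five] using he 2 4 (by decide)
  have b34 : ⁅e 3, e 4⁆ = e 2 + v 3 • e 3 := by
    simpa [d20, Fin.sum_univ_five] using he 3 4 (by decide)
  have bz : ∀ i j : Fin 5, j ≠ 4 → i < j → ⁅e i, e j⁆ = 0 := by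
    intro i j hj hij
    have := he i j hij
    simp [d20, hj, Fin.sum_univ_five] at this
    exact this
  have z : ∀ a b : Fin 5, a ≠ 4 → b ≠ 4 → ⁅e a, e b⁆ = 0 := by
    intro a b ha hb
    rcases lt_trichotomy a b with h | h | h
    · exact bz a b hb h
    · subst h; exact lie_self _
    · rw [← lie_skew, bz b a ha h, neg_zero]
  set U : Fin 5 → L := ![e 3,
      t • e 2 + (t * v 3) • e 3,
      (t ^ 2) • e 1 + (t ^ 2 * (v 2 + v 3)) • e 2 + (t ^ 2 * v 3 ^ 2) • e 3,
      (t ^ 3) • e 0 + (t ^ 3 * (v 1 + v 2 + v 3)) • e 1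
        + (t ^ 3 * (v 2 ^ 2 + v 2 * v 3 + v 3 ^ 2)) • e 2 + (t ^ 3 * v 3 ^ 3) • e 3,
      t • e 4] with hU
  set W : Fin 5 → L := ![
      (-(v 1 * v 2 * v 3)) • e 0 + ((v 1 * v 2 + v 1 * v 3 + v 2 * v 3) * t⁻¹) • e 1
        + (-((v 1 + v 2 + v 3) * t⁻¹ ^ 2)) • e 2 + (t⁻¹ ^ 3) • e 3,
      (v 2 * v 3) • e 0 + (-((v 2 + v 3) * t⁻¹)) • e 1 + (t⁻¹ ^ 2) • e 2,
      (-(v 3)) • e 0 + t⁻¹ • e 1,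
      e 0,
      t⁻¹ • e 4] with hW
  set g : L →ₗ[ℂ] L := e.constr ℂ U with hg
  set g' : L →ₗ[ℂ] L := e.constr ℂ W with hg'
  have hgU : ∀ i, g (e i) = U i := fun i => e.constr_basis ℂ U i
  have hgW : ∀ i, g' (e i) = W i := fun i => e.constr_basis ℂ W i
  have hgU' : ∀ i, g (e i) = U i := hgU
  have hgW' : ∀ i, g' (e i) = W i := hgW
  have k0 : g (g' (e 0)) = e 0 := by
    rw [hgW']
    simp only [hU, hW, Matrix.cons_val_zero, Matrix.cons_val_one, Matrix.head_cons,
        Matrix.cons_val_two, Matrix.tail_cons, Matrix.cons_val_three, Matrix.cons_val_four,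
        map_add, map_smul, map_neg, hgU, hgW]
    first
      | done
      | (match_scalars
         all_goals field_simp
         all_goals ring)
  have l0 : g' (g (e 0)) = e 0 := by
    rw [hgU']
    simp only [hU, hW, Matrix.cons_val_zero, Matrix.cons_val_one, Matrix.head_cons,
        Matrix.cons_val_two, Matrix.tail_cons, Matrix.cons_val_three, Matrix.cons_val_four,
        map_add, map_smul, map_neg, hgU, hgW]
    first
      | done
      | (match_scalars
         all_goals field_simp
         all_goals ring)
  have k1 : g (g' (e 1)) = e 1 := by
    rw [hgW']
    simp only [hU, hW, Matrix.cons_val_zero, Matrix.cons_val_one, Matrix.head_cons,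
        Matrix.cons_val_two, Matrix.tail_cons, Matrix.cons_val_three, Matrix.cons_val_four,
        map_add, map_smul, map_neg, hgU, hgW]
    first
      | done
      | (match_scalars
         all_goals field_simp
         all_goals ring)
  have l1 : g' (g (e 1)) = e 1 := by
    rw [hgU']
    simp only [hU, hW, Matrix.cons_val_zero, Matrix.cons_val_one, Matrix.head_cons,
        Matrix.cons_val_two, Matrix.tail_cons, Matrix.cons_val_three, Matrix.cons_val_four,
        map_add, map_smul, map_neg, hgU, hgW]
    first
      | done
      | (match_scalars
         all_goals field_simp
         all_goals ring)
  have k2 : g (g' (e 2)) = e 2 := by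
    rw [hgW']
    simp only [hU, hW, Matrix.cons_val_zero, Matrix.cons_val_one, Matrix.head_cons,
        Matrix.cons_val_two, Matrix.tail_cons, Matrix.cons_val_three, Matrix.cons_val_four,
        map_add, map_smul, map_neg, hgU, hgW]
    first
      | done
      | (match_scalars
         all_goals field_simp
         all_goals ring)
  have l2 : g' (g (e 2)) = e 2 := by
    rw [hgU']
    simp only [hU, hW, Matrix.cons_val_zero, Matrix.cons_val_one, Matrix.head_cons,
        Matrix.cons_val_two, Matrix.tail_cons, Matrix.cons_val_three, Matrix.cons_val_four,
        map_add, map_smul, map_neg, hgU, hgW]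
    first
      | done
      | (match_scalars
         all_goals field_simp
         all_goals ring)
  have k3 : g (g' (e 3)) = e 3 := by
    rw [hgW']
    simp only [hU, hW, Matrix.cons_val_zero, Matrix.cons_val_one, Matrix.head_cons,
        Matrix.cons_val_two, Matrix.tail_cons, Matrix.cons_val_three, Matrix.cons_val_four,
        map_add, map_smul, map_neg, hgU, hgW]
    first
      | done
      | (match_scalars
         all_goals field_simp
         all_goals ring)
  have l3 : g' (g (e 3)) = e 3 := by
    rw [hgU']
    simp only [hU, hW, Matrix.cons_val_zero, Matrix.cons_val_one, Matrix.head_cons,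
        Matrix.cons_val_two, Matrix.tail_cons, Matrix.cons_val_three, Matrix.cons_val_four,
        map_add, map_smul, map_neg, hgU, hgW]
    first
      | done
      | (match_scalars
         all_goals field_simp
         all_goals ring)
  have k4 : g (g' (e 4)) = e 4 := by
    rw [hgW']
    simp only [hU, hW, Matrix.cons_val_zero, Matrix.cons_val_one, Matrix.head_cons,
        Matrix.cons_val_two, Matrix.tail_cons, Matrix.cons_val_three, Matrix.cons_val_four,
        map_add, map_smul, map_neg, hgU, hgW]
    first
      | done
      | (match_scalars
         all_goals field_simp
         all_goals ring)
  have l4 : g' (g (e 4)) = e 4 := by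
    rw [hgU']
    simp only [hU, hW, Matrix.cons_val_zero, Matrix.cons_val_one, Matrix.head_cons,
        Matrix.cons_val_two, Matrix.tail_cons, Matrix.cons_val_three, Matrix.cons_val_four,
        map_add, map_smul, map_neg, hgU, hgW]
    first
      | done
      | (match_scalars
         all_goals field_simp
         all_goals ring)
  have hgg' : g.comp g' = LinearMap.id := by
    apply e.ext; intro i
    simp only [LinearMap.coe_comp, Function.comp_apply, LinearMap.id_coe, id_eq]
    fin_cases i
    · exact k0
    · exact k1
    · exact k2
    · exact k3
    · exact k4
  have hg'g : g'.comp g = LinearMap.id := by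
    apply e.ext; intro i
    simp only [LinearMap.coe_comp, Function.comp_apply, LinearMap.id_coe, id_eq]
    fin_cases i
    · exact l0
    · exact l1
    · exact l2
    · exact l3
    · exact l4
  set G : L ≃ₗ[ℂ] L := LinearEquiv.ofLinear g g' hgg' hg'g with hGdef
  set F : Module.Basis (Fin 5) ℂ L := e.map G with hFB
  have hF : ∀ i, F i = U i := by
    intro i
    rw [hFB, Module.Basis.map_apply, hGdef, LinearEquiv.ofLinear_apply]
    exact hgU i
  set cc : Fin 4 → ℂ := ![t * E1 v, t ^ 2 * E2 v, t ^ 3 * E3 v, t ^ 4 * E4 v] with hcc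
  refine ⟨F, ?_⟩
  intro i j hij
  have K01 : ⁅F 0, F 1⁆ = ∑ k, comp cc 0 1 k • F k := by
    simp only [Fin.sum_univ_five, hF]
    simp only [hU, Matrix.cons_val_zero, Matrix.cons_val_one, Matrix.head_cons,
      Matrix.cons_val_two, Matrix.tail_cons, Matrix.cons_val_three, Matrix.cons_val_four]
    simp only [lie_add, add_lie, smul_lie, lie_smul, b04, b14, b24, b34, lie_self,
           z 0 0 (by decide) (by decide),
           z 0 1 (by decide) (by decide),
           z 0 2 (by decide) (by decide),
           z 0 3 (by decide) (by decide),
           z 1 0 (by decide) (by decide),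
           z 1 1 (by decide) (by decide),
           z 1 2 (by decide) (by decide),
           z 1 3 (by decide) (by decide),
           z 2 0 (by decide) (by decide),
           z 2 1 (by decide) (by decide),
           z 2 2 (by decide) (by decide),
           z 2 3 (by decide) (by decide),
           z 3 0 (by decide) (by decide),
           z 3 1 (by decide) (by decide),
           z 3 2 (by decide) (by decide),
           z 3 3 (by decide) (by decide),
           smul_zero, zero_add, add_zero, neg_smul, smul_smul, smul_add, smul_neg]
    simp [comp, cc, E1, E2, E3, E4]
    first
      | done
      | (match_scalars
         all_goals ring)
  have K02 : ⁅F 0, F 2⁆ = ∑ k, comp cc 0 2 k • F k := by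
    simp only [Fin.sum_univ_five, hF]
    simp only [hU, Matrix.cons_val_zero, Matrix.cons_val_one, Matrix.head_cons,
      Matrix.cons_val_two, Matrix.tail_cons, Matrix.cons_val_three, Matrix.cons_val_four]
    simp only [lie_add, add_lie, smul_lie, lie_smul, b04, b14, b24, b34, lie_self,
           z 0 0 (by decide) (by decide),
           z 0 1 (by decide) (by decide),
           z 0 2 (by decide) (by decide),
           z 0 3 (by decide) (by decide),
           z 1 0 (by decide) (by decide),
           z 1 1 (by decide) (by decide),
           z 1 2 (by decide) (by decide),
           z 1 3 (by decide) (by decide),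
           z 2 0 (by decide) (by decide),
           z 2 1 (by decide) (by decide),
           z 2 2 (by decide) (by decide),
           z 2 3 (by decide) (by decide),
           z 3 0 (by decide) (by decide),
           z 3 1 (by decide) (by decide),
           z 3 2 (by decide) (by decide),
           z 3 3 (by decide) (by decide),
           smul_zero, zero_add, add_zero, neg_smul, smul_smul, smul_add, smul_neg]
    simp [comp, cc, E1, E2, E3, E4]
    first
      | done
      | (match_scalars
         all_goals ring)
  have K03 : ⁅F 0, F 3⁆ = ∑ k, comp cc 0 3 k • F k := by
    simp only [Fin.sum_univ_five, hF]
    simp only [hU, Matrix.cons_val_zero, Matrix.cons_val_one, Matrix.head_cons,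
      Matrix.cons_val_two, Matrix.tail_cons, Matrix.cons_val_three, Matrix.cons_val_four]
    simp only [lie_add, add_lie, smul_lie, lie_smul, b04, b14, b24, b34, lie_self,
           z 0 0 (by decide) (by decide),
           z 0 1 (by decide) (by decide),
           z 0 2 (by decide) (by decide),
           z 0 3 (by decide) (by decide),
           z 1 0 (by decide) (by decide),
           z 1 1 (by decide) (by decide),
           z 1 2 (by decide) (by decide),
           z 1 3 (by decide) (by decide),
           z 2 0 (by decide) (by decide),
           z 2 1 (by decide) (by decide),
           z 2 2 (by decide) (by decide),
           z 2 3 (by decide) (by decide),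
           z 3 0 (by decide) (by decide),
           z 3 1 (by decide) (by decide),
           z 3 2 (by decide) (by decide),
           z 3 3 (by decide) (by decide),
           smul_zero, zero_add, add_zero, neg_smul, smul_smul, smul_add, smul_neg]
    simp [comp, cc, E1, E2, E3, E4]
    first
      | done
      | (match_scalars
         all_goals ring)
  have K04 : ⁅F 0, F 4⁆ = ∑ k, comp cc 0 4 k • F k := by
    simp only [Fin.sum_univ_five, hF]
    simp only [hU, Matrix.cons_val_zero, Matrix.cons_val_one, Matrix.head_cons,
      Matrix.cons_val_two, Matrix.tail_cons, Matrix.cons_val_three, Matrix.cons_val_four]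
    simp only [lie_add, add_lie, smul_lie, lie_smul, b04, b14, b24, b34, lie_self,
           z 0 0 (by decide) (by decide),
           z 0 1 (by decide) (by decide),
           z 0 2 (by decide) (by decide),
           z 0 3 (by decide) (by decide),
           z 1 0 (by decide) (by decide),
           z 1 1 (by decide) (by decide),
           z 1 2 (by decide) (by decide),
           z 1 3 (by decide) (by decide),
           z 2 0 (by decide) (by decide),
           z 2 1 (by decide) (by decide),
           z 2 2 (by decide) (by decide),
           z 2 3 (by decide) (by decide),
           z 3 0 (by decide) (by decide),
           z 3 1 (by decide) (by decide),
           z 3 2 (by decide) (by decide),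
           z 3 3 (by decide) (by decide),
           smul_zero, zero_add, add_zero, neg_smul, smul_smul, smul_add, smul_neg]
    simp [comp, cc, E1, E2, E3, E4]
    first
      | done
      | (match_scalars
         all_goals ring)
  have K12 : ⁅F 1, F 2⁆ = ∑ k, comp cc 1 2 k • F k := by
    simp only [Fin.sum_univ_five, hF]
    simp only [hU, Matrix.cons_val_zero, Matrix.cons_val_one, Matrix.head_cons,
      Matrix.cons_val_two, Matrix.tail_cons, Matrix.cons_val_three, Matrix.cons_val_four]
    simp only [lie_add, add_lie, smul_lie, lie_smul, b04, b14, b24, b34, lie_self,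
           z 0 0 (by decide) (by decide),
           z 0 1 (by decide) (by decide),
           z 0 2 (by decide) (by decide),
           z 0 3 (by decide) (by decide),
           z 1 0 (by decide) (by decide),
           z 1 1 (by decide) (by decide),
           z 1 2 (by decide) (by decide),
           z 1 3 (by decide) (by decide),
           z 2 0 (by decide) (by decide),
           z 2 1 (by decide) (by decide),
           z 2 2 (by decide) (by decide),
           z 2 3 (by decide) (by decide),
           z 3 0 (by decide) (by decide),
           z 3 1 (by decide) (by decide),
           z 3 2 (by decide) (by decide),
           z 3 3 (by decide) (by decide),
           smul_zero, zero_add, add_zero, neg_smul, smul_smul, smul_add, smul_neg]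
    simp [comp, cc, E1, E2, E3, E4]
    first
      | done
      | (match_scalars
         all_goals ring)
  have K13 : ⁅F 1, F 3⁆ = ∑ k, comp cc 1 3 k • F k := by
    simp only [Fin.sum_univ_five, hF]
    simp only [hU, Matrix.cons_val_zero, Matrix.cons_val_one, Matrix.head_cons,
      Matrix.cons_val_two, Matrix.tail_cons, Matrix.cons_val_three, Matrix.cons_val_four]
    simp only [lie_add, add_lie, smul_lie, lie_smul, b04, b14, b24, b34, lie_self,
           z 0 0 (by decide) (by decide),
           z 0 1 (by decide) (by decide),
           z 0 2 (by decide) (by decide),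
           z 0 3 (by decide) (by decide),
           z 1 0 (by decide) (by decide),
           z 1 1 (by decide) (by decide),
           z 1 2 (by decide) (by decide),
           z 1 3 (by decide) (by decide),
           z 2 0 (by decide) (by decide),
           z 2 1 (by decide) (by decide),
           z 2 2 (by decide) (by decide),
           z 2 3 (by decide) (by decide),
           z 3 0 (by decide) (by decide),
           z 3 1 (by decide) (by decide),
           z 3 2 (by decide) (by decide),
           z 3 3 (by decide) (by decide),
           smul_zero, zero_add, add_zero, neg_smul, smul_smul, smul_add, smul_neg]
    simp [comp, cc, E1, E2, E3, E4]
    first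
      | done
      | (match_scalars
         all_goals ring)
  have K14 : ⁅F 1, F 4⁆ = ∑ k, comp cc 1 4 k • F k := by
    simp only [Fin.sum_univ_five, hF]
    simp only [hU, Matrix.cons_val_zero, Matrix.cons_val_one, Matrix.head_cons,
      Matrix.cons_val_two, Matrix.tail_cons, Matrix.cons_val_three, Matrix.cons_val_four]
    simp only [lie_add, add_lie, smul_lie, lie_smul, b04, b14, b24, b34, lie_self,
           z 0 0 (by decide) (by decide),
           z 0 1 (by decide) (by decide),
           z 0 2 (by decide) (by decide),
           z 0 3 (by decide) (by decide),
           z 1 0 (by decide) (by decide),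
           z 1 1 (by decide) (by decide),
           z 1 2 (by decide) (by decide),
           z 1 3 (by decide) (by decide),
           z 2 0 (by decide) (by decide),
           z 2 1 (by decide) (by decide),
           z 2 2 (by decide) (by decide),
           z 2 3 (by decide) (by decide),
           z 3 0 (by decide) (by decide),
           z 3 1 (by decide) (by decide),
           z 3 2 (by decide) (by decide),
           z 3 3 (by decide) (by decide),
           smul_zero, zero_add, add_zero, neg_smul, smul_smul, smul_add, smul_neg]
    simp [comp, cc, E1, E2, E3, E4]
    first
      | done
      | (match_scalars
         all_goals ring)
  have K23 : ⁅F 2, F 3⁆ = ∑ k, comp cc 2 3 k • F k := by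
    simp only [Fin.sum_univ_five, hF]
    simp only [hU, Matrix.cons_val_zero, Matrix.cons_val_one, Matrix.head_cons,
      Matrix.cons_val_two, Matrix.tail_cons, Matrix.cons_val_three, Matrix.cons_val_four]
    simp only [lie_add, add_lie, smul_lie, lie_smul, b04, b14, b24, b34, lie_self,
           z 0 0 (by decide) (by decide),
           z 0 1 (by decide) (by decide),
           z 0 2 (by decide) (by decide),
           z 0 3 (by decide) (by decide),
           z 1 0 (by decide) (by decide),
           z 1 1 (by decide) (by decide),
           z 1 2 (by decide) (by decide),
           z 1 3 (by decide) (by decide),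
           z 2 0 (by decide) (by decide),
           z 2 1 (by decide) (by decide),
           z 2 2 (by decide) (by decide),
           z 2 3 (by decide) (by decide),
           z 3 0 (by decide) (by decide),
           z 3 1 (by decide) (by decide),
           z 3 2 (by decide) (by decide),
           z 3 3 (by decide) (by decide),
           smul_zero, zero_add, add_zero, neg_smul, smul_smul, smul_add, smul_neg]
    simp [comp, cc, E1, E2, E3, E4]
    first
      | done
      | (match_scalars
         all_goals ring)
  have K24 : ⁅F 2, F 4⁆ = ∑ k, comp cc 2 4 k • F k := by
    simp only [Fin.sum_univ_five, hF]
    simp only [hU, Matrix.cons_val_zero, Matrix.cons_val_one, Matrix.head_cons,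
      Matrix.cons_val_two, Matrix.tail_cons, Matrix.cons_val_three, Matrix.cons_val_four]
    simp only [lie_add, add_lie, smul_lie, lie_smul, b04, b14, b24, b34, lie_self,
           z 0 0 (by decide) (by decide),
           z 0 1 (by decide) (by decide),
           z 0 2 (by decide) (by decide),
           z 0 3 (by decide) (by decide),
           z 1 0 (by decide) (by decide),
           z 1 1 (by decide) (by decide),
           z 1 2 (by decide) (by decide),
           z 1 3 (by decide) (by decide),
           z 2 0 (by decide) (by decide),
           z 2 1 (by decide) (by decide),
           z 2 2 (by decide) (by decide),
           z 2 3 (by decide) (by decide),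
           z 3 0 (by decide) (by decide),
           z 3 1 (by decide) (by decide),
           z 3 2 (by decide) (by decide),
           z 3 3 (by decide) (by decide),
           smul_zero, zero_add, add_zero, neg_smul, smul_smul, smul_add, smul_neg]
    simp [comp, cc, E1, E2, E3, E4]
    first
      | done
      | (match_scalars
         all_goals ring)
  have K34 : ⁅F 3, F 4⁆ = ∑ k, comp cc 3 4 k • F k := by
    simp only [Fin.sum_univ_five, hF]
    simp only [hU, Matrix.cons_val_zero, Matrix.cons_val_one, Matrix.head_cons,
      Matrix.cons_val_two, Matrix.tail_cons, Matrix.cons_val_three, Matrix.cons_val_four]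
    simp only [lie_add, add_lie, smul_lie, lie_smul, b04, b14, b24, b34, lie_self,
           z 0 0 (by decide) (by decide),
           z 0 1 (by decide) (by decide),
           z 0 2 (by decide) (by decide),
           z 0 3 (by decide) (by decide),
           z 1 0 (by decide) (by decide),
           z 1 1 (by decide) (by decide),
           z 1 2 (by decide) (by decide),
           z 1 3 (by decide) (by decide),
           z 2 0 (by decide) (by decide),
           z 2 1 (by decide) (by decide),
           z 2 2 (by decide) (by decide),
           z 2 3 (by decide) (by decide),
           z 3 0 (by decide) (by decide),
           z 3 1 (by decide) (by decide),
           z 3 2 (by decide) (by decide),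
           z 3 3 (by decide) (by decide),
           smul_zero, zero_add, add_zero, neg_smul, smul_smul, smul_add, smul_neg]
    simp [comp, cc, E1, E2, E3, E4]
    first
      | done
      | (match_scalars
         all_goals ring)
  fin_cases i <;> fin_cases j <;>
    first
      | exact absurd hij (by decide)
      | exact K01 | exact K02 | exact K03 | exact K04
      | exact K12 | exact K13 | exact K14
      | exact K23 | exact K24
      | exact K34

end D20Aux

/-- For any parameters `p, q, r, s`, any nonzero scalar `t` and any permutation
`π` of the 4-tuple, Lie algebras realizing the patterns `d₂₀(p,q,r,s)` and
`d₂₀(t·π(p,q,r,s))` are isomorphic: the family `d₂₀` is parameterized by `ℙ³/Σ₄`. -/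
theorem d20_projective_orbifold (p q r s t : ℂ) (ht : t ≠ 0) (π : Equiv.Perm (Fin 4))
    (L L' : Type) [LieRing L] [LieAlgebra ℂ L] [LieRing L'] [LieAlgebra ℂ L']
    (hL : Realizes L (d20 ![p, q, r, s]))
    (hL' : Realizes L' (d20 (t • (![p, q, r, s] ∘ π)))) :
    Nonempty (L ≃ₗ⁅ℂ⁆ L') := by
  have hA := D20Aux.realizes_comp L ![p, q, r, s] t ht hL
  have hB := D20Aux.realizes_comp L' (t • (![p, q, r, s] ∘ π)) 1 one_ne_zero hL'
  obtain ⟨hp1, hp2, hp3, hp4⟩ := D20Aux.E_perm π ![p, q, r, s]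
  have hs1 : D20Aux.E1 (t • (![p, q, r, s] ∘ π)) = t * D20Aux.E1 (![p, q, r, s] ∘ π) := by
    simp [D20Aux.E1]; ring
  have hs2 : D20Aux.E2 (t • (![p, q, r, s] ∘ π)) = t ^ 2 * D20Aux.E2 (![p, q, r, s] ∘ π) := by
    simp [D20Aux.E2]; ring
  have hs3 : D20Aux.E3 (t • (![p, q, r, s] ∘ π)) = t ^ 3 * D20Aux.E3 (![p, q, r, s] ∘ π) := by
    simp [D20Aux.E3]; ring
  have hs4 : D20Aux.E4 (t • (![p, q, r, s] ∘ π)) = t ^ 4 * D20Aux.E4 (![p, q, r, s] ∘ π) := by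
    simp [D20Aux.E4]; ring
  have hcc : (![1 * D20Aux.E1 (t • (![p, q, r, s] ∘ π)),
        1 ^ 2 * D20Aux.E2 (t • (![p, q, r, s] ∘ π)),
        1 ^ 3 * D20Aux.E3 (t • (![p, q, r, s] ∘ π)),
        1 ^ 4 * D20Aux.E4 (t • (![p, q, r, s] ∘ π))] : Fin 4 → ℂ)
      = ![t * D20Aux.E1 ![p, q, r, s], t ^ 2 * D20Aux.E2 ![p, q, r, s],
        t ^ 3 * D20Aux.E3 ![p, q, r, s], t ^ 4 * D20Aux.E4 ![p, q, r, s]] := by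
    funext k
    fin_cases k <;> simp [hs1, hs2, hs3, hs4, hp1, hp2, hp3, hp4]
  rw [hcc] at hB
  exact D20Aux.iso_of_realizes_same _ L L' hA hB
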